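/- If a fixed point x_s* of the alternating iteration satisfies x_s* = S_{1/μ}(x_s* + A'(b + Γ(y)/μ − A x_s*)), then x_s* is a minimizer of x ↦ ‖x‖₁ + (μ/2)‖Ax − b − Γ(y)/μ‖₂² over ℝ^N. -/

import Mathlib

open Matrix

noncomputable def softThresh (l w : ℝ) : ℝ := Real.sign w * max (|w| - l) 0

noncomputable def softThreshV {ι : Type*} (l : ℝ) (w : ι → ℝ) : ι → ℝ :=
  fun i => softThresh l (w i)

noncomputable def l1norm {ι : Type*} [Fintype ι] (x : ι → ℝ) : ℝ := ∑ i, |x i|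

noncomputable def l2norm {ι : Type*} [Fintype ι] (x : ι → ℝ) : ℝ :=
  Real.sqrt (∑ i, (x i)^2)

noncomputable def ip {ι : Type*} [Fintype ι] (u v : ι → ℝ) : ℝ := ∑ i, u i * v i

/-- The soft-thresholding operator is the prox of `μ⁻¹ * |·|`; equivalently,
if `z = softThresh μ⁻¹ w`, then `μ (w - z)` is a subgradient of `|·|` at `z`. -/
lemma softThresh_subgrad {μ w z : ℝ} (t : ℝ) (hμ : 0 < μ) (hz : z = softThresh μ⁻¹ w) :
    |z| + μ * (w - z) * (t - z) ≤ |t| := by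
  have hl : 0 < μ⁻¹ := inv_pos.2 hμ
  unfold softThresh at hz
  rcases lt_or_ge μ⁻¹ w with h1 | h1
  · have hw : 0 < w := lt_trans hl h1
    rw [Real.sign_of_pos hw, abs_of_pos hw, one_mul,
        max_eq_left (by linarith)] at hz
    have hz0 : 0 < z := by rw [hz]; linarith
    rw [abs_of_pos hz0, hz]
    have h4 : μ * (w - (w - μ⁻¹)) = 1 := by field_simp; ring
    rw [h4]
    linarith [le_abs_self t]
  rcases lt_or_ge w (-μ⁻¹) with h2 | h2
  · have hw : w < 0 := by linarith
    rw [Real.sign_of_neg hw, abs_of_neg hw,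
        max_eq_left (by linarith)] at hz
    have hz' : z = w + μ⁻¹ := by rw [hz]; ring
    have hz0 : z < 0 := by rw [hz']; linarith
    rw [abs_of_neg hz0, hz']
    have h4 : μ * (w - (w + μ⁻¹)) = -1 := by field_simp; ring
    rw [h4]
    linarith [neg_abs_le t]
  · have habs : |w| ≤ μ⁻¹ := abs_le.2 ⟨by linarith, h1⟩
    have hz0 : z = 0 := by rw [hz, max_eq_right (by linarith), mul_zero]
    rw [hz0]
    simp only [sub_zero, abs_zero, zero_add]
    have h3 : |μ * w * t| ≤ |t| := by
      rw [abs_mul]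
      have h5 : |μ * w| ≤ 1 := by
        rw [abs_mul, abs_of_pos hμ]
        calc μ * |w| ≤ μ * μ⁻¹ := by nlinarith
        _ = 1 := by field_simp
      nlinarith [abs_nonneg t]
    exact le_trans (le_abs_self _) h3

lemma sum_sq_add {ι : Type*} [Fintype ι] (a b : ι → ℝ) :
    ∑ i, (a i + b i)^2 = ∑ i, (a i)^2 + ∑ i, (b i)^2 + 2 * ∑ i, a i * b i := by
  rw [Finset.mul_sum, ← Finset.sum_add_distrib, ← Finset.sum_add_distrib]
  exact Finset.sum_congr rfl fun i _ => by ring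

lemma adjoint_sum {ι κ : Type*} [Fintype ι] [Fintype κ] (A : Matrix ι κ ℝ)
    (d : ι → ℝ) (v : κ → ℝ) :
    ∑ i, (Aᵀ.mulVec d) i * v i = ∑ j, d j * (A.mulVec v) j := by
  simp only [Matrix.mulVec, dotProduct, Matrix.transpose_apply,
    Finset.sum_mul, Finset.mul_sum]
  rw [Finset.sum_comm]
  exact Finset.sum_congr rfl fun j _ => Finset.sum_congr rfl fun i _ => by ring

/-- A fixed point of the soft-thresholding iteration minimizes the `ℓ₁`-regularized
least squares objective `x ↦ ‖x‖₁ + (μ/2)‖Ax - b - Γ(y)/μ‖₂²`. -/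
theorem fixed_point_minimizes {n m : ℕ} (A : Matrix (Fin n) (Fin n ⊕ Fin m) ℝ)
    (hA : A * Aᵀ = 1) (b : Fin n → ℝ) (y : (Fin n ⊕ Fin m) → ℝ) (μ : ℝ) (hμ : 0 < μ)
    (xs : (Fin n ⊕ Fin m) → ℝ)
    (hfix : xs = softThreshV μ⁻¹
      (xs + Aᵀ.mulVec (b + μ⁻¹ • (fun i => y (Sum.inl i)) - A.mulVec xs))) :
    ∀ x : (Fin n ⊕ Fin m) → ℝ,
      l1norm xs + (μ/2) * (l2norm (A.mulVec xs - b - μ⁻¹ • (fun i => y (Sum.inl i))))^2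
        ≤ l1norm x + (μ/2) * (l2norm (A.mulVec x - b - μ⁻¹ • (fun i => y (Sum.inl i))))^2 := by
  intro x
  set γ : Fin n → ℝ := fun i => y (Sum.inl i) with hγ
  set u : Fin n → ℝ := A.mulVec xs - b - μ⁻¹ • γ with hu
  set vA : Fin n → ℝ := A.mulVec (x - xs) with hvA
  set w : (Fin n ⊕ Fin m) → ℝ := xs + Aᵀ.mulVec (b + μ⁻¹ • γ - A.mulVec xs) with hw
  have hl2 : ∀ v : Fin n → ℝ, (l2norm v)^2 = ∑ i, (v i)^2 := by
    intro v
    exact Real.sq_sqrt (Finset.sum_nonneg fun i _ => sq_nonneg _)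
  -- subgradient inequality, summed over coordinates
  have hsub : ∀ i, |xs i| + μ * (w i - xs i) * (x i - xs i) ≤ |x i| :=
    fun i => softThresh_subgrad _ hμ (congrFun hfix i)
  have hS : l1norm xs + μ * ∑ i, (w i - xs i) * (x i - xs i) ≤ l1norm x := by
    unfold l1norm
    rw [Finset.mul_sum, ← Finset.sum_add_distrib]
    refine Finset.sum_le_sum fun i _ => ?_
    calc |xs i| + μ * ((w i - xs i) * (x i - xs i))
        = |xs i| + μ * (w i - xs i) * (x i - xs i) := by ring
      _ ≤ |x i| := hsub i
  -- adjoint identity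
  have hd : (fun i => w i - xs i) = Aᵀ.mulVec (fun j => -(u j)) := by
    funext i
    have : (b + μ⁻¹ • γ - A.mulVec xs) = (fun j => -(u j)) := by
      funext j
      simp [hu, Pi.sub_apply, Pi.add_apply, Pi.smul_apply]
      ring
    simp [hw, this]
  have hadj : ∑ i, (w i - xs i) * (x i - xs i) = ∑ j, -(u j) * vA j := by
    calc ∑ i, (w i - xs i) * (x i - xs i)
        = ∑ i, (Aᵀ.mulVec (fun j => -(u j))) i * ((x - xs) i) := by
          refine Finset.sum_congr rfl fun i _ => ?_
          rw [show w i - xs i = (fun i => w i - xs i) i from rfl, hd]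
          rfl
      _ = ∑ j, -(u j) * vA j := adjoint_sum A _ _
  -- quadratic expansion
  have hquad : ∑ j, ((A.mulVec x - b - μ⁻¹ • γ) j)^2
      = ∑ j, (u j)^2 + ∑ j, (vA j)^2 + 2 * ∑ j, u j * vA j := by
    rw [← sum_sq_add u vA]
    refine Finset.sum_congr rfl fun j _ => ?_
    congr 1
    simp [hu, hvA, Matrix.mulVec_sub, Pi.sub_apply, Pi.add_apply]
    ring
  have hvAnn : 0 ≤ ∑ j, (vA j)^2 := Finset.sum_nonneg fun j _ => sq_nonneg _
  rw [hl2, hl2, hquad]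
  have hS' : l1norm xs - μ * ∑ j, u j * vA j ≤ l1norm x := by
    rw [hadj] at hS
    have : ∑ j, -(u j) * vA j = -∑ j, u j * vA j := by
      rw [← Finset.sum_neg_distrib]
      exact Finset.sum_congr rfl fun j _ => by ring
    rw [this] at hS
    linarith
  nlinarith [hS', hvAnn]
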